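/- arXiv:2111.07481 — 3 statements merged into one kernel-verified Lean document; each statement's English description precedes it below -/
import Mathlib

section
/- Every extreme point of the feasible region of the partition LP (P) of a 2NC-TAP instance lies in the unit cube; that is, if x is an extreme point of {x ∈ ℝ^L : x_ℓ ≥ 0 for all ℓ ∈ L, and Σ_{ℓ ∈ L crossing 𝒫} x_ℓ ≥ |𝒫| − 1 for every non-leaf node u of T and every 𝒫 ∈ Ptn⊇(comps(T−u))}, then 0 ≤ x_ℓ ≤ 1 for every link ℓ ∈ L. -/
open scoped Classical
open Finset

namespace TwoNCTAP

variable {V : Type*}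

/-- The graph `H` with the vertex `u` "deleted": all edges incident to `u` are removed,
so that `u` becomes an isolated vertex. -/
def delVert (H : SimpleGraph V) (u : V) : SimpleGraph V where
  Adj a b := H.Adj a b ∧ a ≠ u ∧ b ≠ u
  symm := ⟨by rintro a b ⟨h, ha, hb⟩; exact ⟨h.symm, hb, ha⟩⟩
  loopless := ⟨by rintro a ⟨h, -, -⟩; exact H.loopless.irrefl a h⟩

/-- The partition of `V ∖ {u}` into the vertex sets of the connected components of `H − u`. -/
def compPartition (H : SimpleGraph V) (u : V) : Set (Set V) :=
  {S | ∃ v, v ≠ u ∧ S = {w | (delVert H u).Reachable v w}}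

/-- `P` is a partition of the set `S`. -/
def IsPartitionOf (P : Set (Set V)) (S : Set V) : Prop :=
  (∀ B ∈ P, B.Nonempty) ∧ (∀ B ∈ P, B ⊆ S) ∧ ∀ v ∈ S, ∃! B : Set V, B ∈ P ∧ v ∈ B

/-- `P ∈ Ptn⊇(comps(T−u))`: `P` is a partition of `V ∖ {u}` each of whose blocks is a
union of vertex sets of connected components of `T − u`. -/
def PtnSup (T : SimpleGraph V) (u : V) (P : Set (Set V)) : Prop :=
  IsPartitionOf P {v | v ≠ u} ∧ ∀ B ∈ compPartition T u, ∃ C ∈ P, B ⊆ C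

/-- An edge `e` crosses the partition `P` if its two endpoints lie in different blocks of `P`. -/
def Crosses (P : Set (Set V)) (e : Sym2 V) : Prop :=
  ∃ v w, e = s(v, w) ∧ ∃ B ∈ P, ∃ C ∈ P, B ≠ C ∧ v ∈ B ∧ w ∈ C

/-- `u` is a non-leaf node of `T`. -/
def NonLeaf (T : SimpleGraph V) (u : V) : Prop := 1 < (T.neighborSet u).ncard

/-- The links of the instance: the edges of `G` that are not edges of the tree `T`. -/
def links (G T : SimpleGraph V) : Set (Sym2 V) := G.edgeSet \ T.edgeSet

variable [Fintype V]

/-- Feasibility for the partition LP (P) of the 2NC-TAP instance `(G, T, cost)`. -/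
def FeasibleP (G T : SimpleGraph V) (x : Sym2 V → ℝ) : Prop :=
  (∀ ℓ ∈ links G T, 0 ≤ x ℓ) ∧
  ∀ u : V, NonLeaf T u → ∀ P : Set (Set V), PtnSup T u P →
    (P.ncard : ℝ) - 1 ≤
      ∑ ℓ ∈ Finset.univ.filter (fun ℓ : Sym2 V => ℓ ∈ links G T ∧ Crosses P ℓ), x ℓ


set_option linter.unusedSectionVars false

lemma merge_ptnSup {T : SimpleGraph V} {u : V} {P : Set (Set V)}
    (hP : PtnSup T u P) {B C : Set V} (hB : B ∈ P) (hC : C ∈ P) (hBC : B ≠ C) :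
    PtnSup T u (insert (B ∪ C) (P \ {B, C})) := by
  obtain ⟨⟨hne, hsub, huniq⟩, hcomp⟩ := hP
  constructor
  · refine ⟨?_, ?_, ?_⟩
    · rintro D (rfl | ⟨hD, -⟩)
      · obtain ⟨v, hv⟩ := hne B hB
        exact ⟨v, Or.inl hv⟩
      · exact hne D hD
    · rintro D (rfl | ⟨hD, -⟩)
      · exact Set.union_subset (hsub B hB) (hsub C hC)
      · exact hsub D hD
    · intro z hz
      obtain ⟨D, ⟨hD, hzD⟩, hDuniq⟩ := huniq z hz
      by_cases hzBC : z ∈ B ∪ C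
      · refine ⟨B ∪ C, ⟨Set.mem_insert _ _, hzBC⟩, ?_⟩
        rintro D' ⟨(rfl | ⟨hD', hD'ne⟩), hzD'⟩
        · rfl
        · exfalso
          rcases hzBC with hzB | hzC
          · have h1 := hDuniq B ⟨hB, hzB⟩
            have h2 := hDuniq D' ⟨hD', hzD'⟩
            exact hD'ne (Or.inl (h2.trans h1.symm))
          · have h1 := hDuniq C ⟨hC, hzC⟩
            have h2 := hDuniq D' ⟨hD', hzD'⟩
            exact hD'ne (Or.inr (h2.trans h1.symm))
      · have hDB : D ≠ B := by rintro rfl; exact hzBC (Or.inl hzD)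
        have hDC : D ≠ C := by rintro rfl; exact hzBC (Or.inr hzD)
        refine ⟨D, ⟨Set.mem_insert_of_mem _ ⟨hD, ?_⟩, hzD⟩, ?_⟩
        · rintro (rfl | rfl) <;> simp_all
        · rintro D' ⟨(rfl | ⟨hD', -⟩), hzD'⟩
          · exact absurd hzD' hzBC
          · exact hDuniq D' ⟨hD', hzD'⟩
  · intro S hS
    obtain ⟨C₀, hC₀, hSC₀⟩ := hcomp S hS
    by_cases h : C₀ = B ∨ C₀ = C
    · refine ⟨B ∪ C, Set.mem_insert _ _, ?_⟩
      rcases h with rfl | rfl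
      · exact hSC₀.trans Set.subset_union_left
      · exact hSC₀.trans Set.subset_union_right
    · exact ⟨C₀, Set.mem_insert_of_mem _ ⟨hC₀, by simpa using h⟩, hSC₀⟩

lemma erase_sum_bound (G T : SimpleGraph V) (x : Sym2 V → ℝ)
    (hx0 : ∀ e ∈ links G T, 0 ≤ x e)
    (hxc : ∀ u : V, NonLeaf T u → ∀ P : Set (Set V), PtnSup T u P →
      (P.ncard : ℝ) - 1 ≤
        ∑ e ∈ Finset.univ.filter (fun e : Sym2 V => e ∈ links G T ∧ Crosses P e), x e)
    {u : V} (hu : NonLeaf T u) {P : Set (Set V)} (hP : PtnSup T u P)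
    {ℓ : Sym2 V} (hcr : Crosses P ℓ) :
    (P.ncard : ℝ) - 2 ≤
      ∑ e ∈ (Finset.univ.filter (fun e : Sym2 V => e ∈ links G T ∧ Crosses P e)).erase ℓ,
        x e := by
  obtain ⟨v, w, rfl, B, hB, C, hC, hBC, hvB, hwC⟩ := hcr
  set P' : Set (Set V) := insert (B ∪ C) (P \ {B, C}) with hP'def
  have hP' : PtnSup T u P' := merge_ptnSup hP hB hC hBC
  have hPfin : P.Finite := Set.toFinite P
  have hBCnot : B ∪ C ∉ P := by
    intro h
    have hvS : v ∈ {z | z ≠ u} := hP.1.2.1 B hB hvB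
    obtain ⟨D, -, hDu⟩ := hP.1.2.2 v hvS
    have h1 : B ∪ C = D := hDu _ ⟨h, Or.inl hvB⟩
    have h2 : B = D := hDu _ ⟨hB, hvB⟩
    have hCB : C ⊆ B := by rw [h2, ← h1]; exact Set.subset_union_right
    have hwS : w ∈ {z | z ≠ u} := hP.1.2.1 C hC hwC
    obtain ⟨D', -, hD'u⟩ := hP.1.2.2 w hwS
    exact hBC ((hD'u _ ⟨hB, hCB hwC⟩).trans (hD'u _ ⟨hC, hwC⟩).symm)
  have hsubBC : {B, C} ⊆ P := by rintro D (rfl | rfl); exacts [hB, hC]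
  have h2le : 2 ≤ P.ncard := by
    have := Set.ncard_le_ncard hsubBC hPfin
    rwa [Set.ncard_pair hBC] at this
  have hcard : P'.ncard = P.ncard - 1 := by
    rw [hP'def, Set.ncard_insert_of_notMem (fun h => hBCnot h.1) hPfin.diff,
      Set.ncard_diff hsubBC, Set.ncard_pair hBC]
    omega
  have hsubset : Finset.univ.filter (fun e : Sym2 V => e ∈ links G T ∧ Crosses P' e) ⊆
      (Finset.univ.filter (fun e : Sym2 V => e ∈ links G T ∧ Crosses P e)).erase s(v, w) := by
    intro e he
    simp only [Finset.mem_filter, Finset.mem_univ, true_and] at he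
    obtain ⟨hel, hcr'⟩ := he
    refine Finset.mem_erase.2 ⟨?_, Finset.mem_filter.2 ⟨Finset.mem_univ _, hel, ?_⟩⟩
    · rintro rfl
      obtain ⟨a, b, hab, B₁, hB₁, C₁, hC₁, hne, haB₁, hbC₁⟩ := hcr'
      have hmem : a ∈ B ∪ C ∧ b ∈ B ∪ C := by
        rw [Sym2.eq_iff] at hab
        rcases hab with ⟨rfl, rfl⟩ | ⟨rfl, rfl⟩
        · exact ⟨Or.inl hvB, Or.inr hwC⟩
        · exact ⟨Or.inr hwC, Or.inl hvB⟩
      have haS : a ∈ {z | z ≠ u} := hP'.1.2.1 _ (Set.mem_insert _ _) hmem.1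
      have hbS : b ∈ {z | z ≠ u} := hP'.1.2.1 _ (Set.mem_insert _ _) hmem.2
      obtain ⟨D, -, hDu⟩ := hP'.1.2.2 a haS
      obtain ⟨D', -, hD'u⟩ := hP'.1.2.2 b hbS
      have h1 : B₁ = B ∪ C := (hDu _ ⟨hB₁, haB₁⟩).trans (hDu _ ⟨Set.mem_insert _ _, hmem.1⟩).symm
      have h2 : C₁ = B ∪ C := (hD'u _ ⟨hC₁, hbC₁⟩).trans (hD'u _ ⟨Set.mem_insert _ _, hmem.2⟩).symm
      exact hne (h1.trans h2.symm)
    · obtain ⟨a, b, rfl, B₁, hB₁, C₁, hC₁, hne, haB₁, hbC₁⟩ := hcr'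
      rcases hB₁ with rfl | ⟨hB₁P, hB₁ne⟩ <;> rcases hC₁ with h' | ⟨hC₁P, hC₁ne⟩
      · exact absurd h'.symm hne
      · have hC₁B : C₁ ≠ B := fun h => hC₁ne (Or.inl h)
        have hC₁C : C₁ ≠ C := fun h => hC₁ne (Or.inr h)
        rcases haB₁ with ha | ha
        · exact ⟨a, b, rfl, B, hB, C₁, hC₁P, hC₁B.symm, ha, hbC₁⟩
        · exact ⟨a, b, rfl, C, hC, C₁, hC₁P, hC₁C.symm, ha, hbC₁⟩
      · subst h'
        have hB₁B : B₁ ≠ B := fun h => hB₁ne (Or.inl h)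
        have hB₁C : B₁ ≠ C := fun h => hB₁ne (Or.inr h)
        rcases hbC₁ with hb | hb
        · exact ⟨a, b, rfl, B₁, hB₁P, B, hB, hB₁B, haB₁, hb⟩
        · exact ⟨a, b, rfl, B₁, hB₁P, C, hC, hB₁C, haB₁, hb⟩
      · exact ⟨a, b, rfl, B₁, hB₁P, C₁, hC₁P, hne, haB₁, hbC₁⟩
  have hP'bound := hxc u hu P' hP'
  have hcast : (P'.ncard : ℝ) = (P.ncard : ℝ) - 1 := by
    rw [hcard, Nat.cast_sub (by omega)]; norm_num
  calc (P.ncard : ℝ) - 2 = (P'.ncard : ℝ) - 1 := by rw [hcast]; ring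
    _ ≤ _ := hP'bound
    _ ≤ _ := Finset.sum_le_sum_of_subset_of_nonneg hsubset
        (fun e he _ => hx0 e ((Finset.mem_filter.1 (Finset.mem_of_mem_erase he)).2.1))


/-- Every extreme point of the feasible region of the partition LP (P)
of a 2NC-TAP instance lies in the unit cube. The feasible region is viewed inside
`ℝ^(Sym2 V)`, with coordinates supported on the set of links. -/
theorem extreme_points_of_partitionLP_in_unit_cube
    (G T : SimpleGraph V) (hV : 3 ≤ Fintype.card V)
    (hTG : T ≤ G) (hT : T.IsTree)
    (cost : Sym2 V → ℝ) (hcost : ∀ ℓ ∈ links G T, 0 ≤ cost ℓ)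
    (x : Sym2 V → ℝ)
    (hx : x ∈ Set.extremePoints ℝ
      {z : Sym2 V → ℝ | (∀ ℓ, ℓ ∉ links G T → z ℓ = 0) ∧ FeasibleP G T z}) :
    ∀ ℓ ∈ links G T, 0 ≤ x ℓ ∧ x ℓ ≤ 1 := by
  obtain ⟨⟨hz0, hfeas⟩, hext⟩ := hx
  intro ℓ hℓ
  refine ⟨hfeas.1 ℓ hℓ, ?_⟩
  by_contra hgt
  push_neg at hgt
  set ε : ℝ := x ℓ - 1 with hεdef
  have hε : 0 < ε := by simp only [hεdef]; linarith
  set y₁ : Sym2 V → ℝ := Function.update x ℓ 1 with hy₁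
  set y₂ : Sym2 V → ℝ := Function.update x ℓ (x ℓ + ε) with hy₂
  have hy₁mem : y₁ ∈
      {z : Sym2 V → ℝ | (∀ ℓ, ℓ ∉ links G T → z ℓ = 0) ∧ FeasibleP G T z} := by
    refine ⟨?_, ?_, ?_⟩
    · intro e he
      rw [hy₁, Function.update_of_ne (fun h => he (by rw [h]; exact hℓ))]
      exact hz0 e he
    · intro e he
      by_cases h : e = ℓ
      · subst h; rw [hy₁, Function.update_self]; norm_num
      · rw [hy₁, Function.update_of_ne h]; exact hfeas.1 e he
    · intro u hu P hP
      by_cases hin : ℓ ∈ Finset.univ.filter (fun e : Sym2 V => e ∈ links G T ∧ Crosses P e)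
      · have hcr : Crosses P ℓ := (Finset.mem_filter.1 hin).2.2
        have hbound := erase_sum_bound G T x hfeas.1 hfeas.2 hu hP hcr
        rw [← Finset.add_sum_erase _ _ hin]
        have hrest : ∑ e ∈ (Finset.univ.filter
              (fun e : Sym2 V => e ∈ links G T ∧ Crosses P e)).erase ℓ, y₁ e
            = ∑ e ∈ (Finset.univ.filter
              (fun e : Sym2 V => e ∈ links G T ∧ Crosses P e)).erase ℓ, x e :=
          Finset.sum_congr rfl (fun e he => by
            rw [hy₁, Function.update_of_ne (Finset.ne_of_mem_erase he)])
        rw [hrest, hy₁, Function.update_self]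
        linarith
      · have heq : ∀ e ∈ Finset.univ.filter
            (fun e : Sym2 V => e ∈ links G T ∧ Crosses P e), y₁ e = x e :=
          fun e he => by
            rw [hy₁, Function.update_of_ne (fun h => hin (by rw [← h]; exact he))]
        rw [Finset.sum_congr rfl heq]
        exact hfeas.2 u hu P hP
  have hy₂mem : y₂ ∈
      {z : Sym2 V → ℝ | (∀ ℓ, ℓ ∉ links G T → z ℓ = 0) ∧ FeasibleP G T z} := by
    refine ⟨?_, ?_, ?_⟩
    · intro e he
      rw [hy₂, Function.update_of_ne (fun h => he (by rw [h]; exact hℓ))]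
      exact hz0 e he
    · intro e he
      by_cases h : e = ℓ
      · subst h; rw [hy₂, Function.update_self]; linarith [hfeas.1 e he]
      · rw [hy₂, Function.update_of_ne h]; exact hfeas.1 e he
    · intro u hu P hP
      refine le_trans (hfeas.2 u hu P hP) (Finset.sum_le_sum fun e _ => ?_)
      by_cases h : e = ℓ
      · subst h; rw [hy₂, Function.update_self]; linarith
      · rw [hy₂, Function.update_of_ne h]
  have hseg : x ∈ openSegment ℝ y₁ y₂ := by
    refine ⟨1/2, 1/2, by norm_num, by norm_num, by norm_num, ?_⟩
    funext e
    simp only [Pi.add_apply, Pi.smul_apply, smul_eq_mul]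
    by_cases h : e = ℓ
    · subst h
      rw [hy₁, hy₂, Function.update_self, Function.update_self, hεdef]
      ring
    · rw [hy₁, hy₂, Function.update_of_ne h, Function.update_of_ne h]
      ring
  have h1 : y₁ = x := hext hy₁mem hy₂mem hseg
  have := congrFun h1 ℓ
  rw [hy₁, Function.update_self] at this
  linarith


end TwoNCTAP
end

section
/- Let x ∈ ℝ^L be a feasible solution of the partition LP (P) of a 2NC-TAP instance, and define x̃ ∈ ℝ^E by x̃_ℓ := x_ℓ for each link ℓ ∈ L and x̃_e := 1 for each tree edge e ∈ E(T). Then x̃ satisfies all cut constraints for 2-edge connectivity: for every set S with ∅ ⊊ S ⊊ V, Σ_{e ∈ δ_G(S)} x̃_e ≥ 2, where δ_G(S) denotes the set of edges of G with exactly one endpoint in S. -/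
open scoped Classical
open Finset

namespace TwoNCTAP

variable {V : Type*}

variable [Fintype V]

/-- The edge `e` lies in the cut `δ(S)`: it has exactly one endpoint in `S`. -/
def inCut (S : Set V) (e : Sym2 V) : Prop :=
  ∃ a b, e = s(a, b) ∧ a ∈ S ∧ b ∉ S

lemma walk_ind {H : SimpleGraph V} {pr : V → Prop}
    (hstep : ∀ a b, H.Adj a b → pr a → pr b) :
    ∀ {a b : V}, H.Walk a b → pr a → pr b := by
  intro a b w
  induction w with
  | nil => exact id
  | cons h' p ih => exact fun ha => ih (hstep _ _ h' ha)

lemma reach_ind {H : SimpleGraph V} {pr : V → Prop}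
    (hstep : ∀ a b, H.Adj a b → pr a → pr b) {a b : V}
    (h : H.Reachable a b) (ha : pr a) : pr b :=
  h.elim fun w => walk_ind hstep w ha

lemma inCut_compl_iff (S : Set V) (e : Sym2 V) : inCut Sᶜ e ↔ inCut S e := by
  constructor
  · rintro ⟨a, b, rfl, ha, hb⟩
    exact ⟨b, a, Sym2.eq_swap, by simpa using hb, ha⟩
  · rintro ⟨a, b, rfl, ha, hb⟩
    exact ⟨b, a, Sym2.eq_swap, hb, by simpa using ha⟩

lemma nonleaf_of_adj (T : SimpleGraph V) (hV : 3 ≤ Fintype.card V) (hT : T.IsTree)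
    {u v : V} (huv : T.Adj u v) : NonLeaf T u ∨ NonLeaf T v := by
  by_contra hc
  push_neg at hc
  obtain ⟨hu, hv⟩ := hc
  simp only [NonLeaf, not_lt] at hu hv
  have key : ∀ a b : V, T.Adj a b → (T.neighborSet a).ncard ≤ 1 → T.neighborSet a = {b} := by
    intro a b hab h1
    have hpos : 0 < (T.neighborSet a).ncard :=
      (Set.ncard_pos (Set.toFinite _)).mpr ⟨b, hab⟩
    obtain ⟨c, hc⟩ := Set.ncard_eq_one.mp (le_antisymm h1 hpos)
    have hb : b ∈ ({c} : Set V) := hc ▸ (hab : b ∈ T.neighborSet a)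
    rw [Set.mem_singleton_iff] at hb
    rw [hc, hb]
  have hNu : T.neighborSet u = {v} := key u v huv hu
  have hNv : T.neighborSet v = {u} := key v u huv.symm hv
  obtain ⟨w, hwu, hwv⟩ : ∃ w, w ≠ u ∧ w ≠ v := by
    by_contra h
    push_neg at h
    have hsub : (Finset.univ : Finset V) ⊆ {u, v} := by
      intro z _
      rcases eq_or_ne z u with h' | h'
      · simp [h']
      · simp [h z h']
    have h3 := Finset.card_le_card hsub
    rw [Finset.card_univ] at h3
    have h2 : ({u, v} : Finset V).card ≤ 2 :=
      le_trans (Finset.card_insert_le _ _) (by simp)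
    omega
  obtain ⟨p⟩ := hT.isConnected.preconnected w u
  obtain ⟨d, -, hdf, hds⟩ := p.exists_boundary_dart {z | z ≠ u ∧ z ≠ v} ⟨hwu, hwv⟩
    (by simp)
  have hadj := d.adj
  rcases not_and_or.mp hds with h | h
  · have hmem : d.fst ∈ T.neighborSet u := by
      rw [not_ne_iff.mp h] at hadj; exact hadj.symm
    rw [hNu] at hmem
    exact hdf.2 hmem
  · have hmem : d.fst ∈ T.neighborSet v := by
      rw [not_ne_iff.mp h] at hadj; exact hadj.symm
    rw [hNv] at hmem
    exact hdf.1 hmem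

lemma key_lemma (G T : SimpleGraph V) (hTG : T ≤ G) (hT : T.IsTree)
    (x : Sym2 V → ℝ) (hx : FeasibleP G T x) (S : Set V) (u v : V)
    (huv : T.Adj u v) (huS : u ∈ S) (hvS : v ∉ S)
    (huniq : ∀ e ∈ T.edgeSet, inCut S e → e = s(u, v)) (hu : NonLeaf T u) :
    (2 : ℝ) ≤ ∑ e ∈ Finset.univ.filter (fun e : Sym2 V => e ∈ G.edgeSet ∧ inCut S e),
        (if e ∈ T.edgeSet then 1 else x e) := by
  set f : Sym2 V → ℝ := fun e => if e ∈ T.edgeSet then 1 else x e with hf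
  set A : Finset (Sym2 V) :=
    Finset.univ.filter (fun e : Sym2 V => e ∈ G.edgeSet ∧ inCut S e) with hA
  have hmemA : ∀ e, e ∈ A ↔ e ∈ G.edgeSet ∧ inCut S e := by
    intro e; simp [hA]
  have hnonneg : ∀ e ∈ A, 0 ≤ f e := by
    intro e he
    obtain ⟨hG, -⟩ := (hmemA e).1 he
    by_cases h : e ∈ T.edgeSet
    · simp [hf, h]
    · simpa [hf, h] using hx.1 e ⟨hG, h⟩
  have he0T : s(u, v) ∈ T.edgeSet := T.mem_edgeSet.mpr huv
  have he0A : s(u, v) ∈ A :=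
    (hmemA _).2 ⟨G.mem_edgeSet.mpr (hTG huv), u, v, rfl, huS, hvS⟩
  obtain ⟨w, hwN, hwv⟩ := Set.exists_ne_of_one_lt_ncard hu v
  have hwAdj : T.Adj u w := hwN
  have hwu : w ≠ u := hwAdj.ne'
  have hwS : w ∈ S := by
    by_contra hws
    have h := huniq s(u, w) (T.mem_edgeSet.mpr hwAdj) ⟨u, w, rfl, huS, hws⟩
    rcases Sym2.eq_iff.mp h with ⟨-, h2⟩ | ⟨h1, -⟩
    · exact hwv h2
    · exact huv.ne h1
  set P : Set (Set V) := {S \ {u}, Sᶜ} with hPdef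
  have hmemP : ∀ B, B ∈ P ↔ B = S \ {u} ∨ B = Sᶜ := by
    intro B; simp [hPdef]
  have hB1 : (S \ {u} : Set V) ∈ P := (hmemP _).2 (Or.inl rfl)
  have hB2 : (Sᶜ : Set V) ∈ P := (hmemP _).2 (Or.inr rfl)
  have hBne : (S \ {u} : Set V) ≠ Sᶜ := by
    intro h
    have : w ∈ (Sᶜ : Set V) := h ▸ ⟨hwS, hwu⟩
    exact this hwS
  have hcard : P.ncard = 2 := Set.ncard_pair hBne
  have hstep1 : ∀ a b, (delVert T u).Adj a b → (a ∈ S ∧ a ≠ u) → (b ∈ S ∧ b ≠ u) := by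
    rintro a b ⟨hab, hau, hbu⟩ ⟨haS, -⟩
    refine ⟨?_, hbu⟩
    by_contra hbS
    have h := huniq s(a, b) (T.mem_edgeSet.mpr hab) ⟨a, b, rfl, haS, hbS⟩
    rcases Sym2.eq_iff.mp h with ⟨h1, -⟩ | ⟨-, h2⟩
    · exact hau h1
    · exact hbu h2
  have hstep2 : ∀ a b, (delVert T u).Adj a b → (a ∉ S ∧ a ≠ u) → (b ∉ S ∧ b ≠ u) := by
    rintro a b ⟨hab, hau, hbu⟩ ⟨haS, -⟩
    refine ⟨?_, hbu⟩
    intro hbS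
    have h := huniq s(a, b) (T.mem_edgeSet.mpr hab) ⟨b, a, Sym2.eq_swap, hbS, haS⟩
    rcases Sym2.eq_iff.mp h with ⟨h1, -⟩ | ⟨-, h2⟩
    · exact hau h1
    · exact hbu h2
  have hP : PtnSup T u P := by
    constructor
    · refine ⟨?_, ?_, ?_⟩
      · intro B hB
        rcases (hmemP B).1 hB with h | h
        · exact h ▸ ⟨w, hwS, hwu⟩
        · exact h ▸ ⟨v, hvS⟩
      · intro B hB
        rcases (hmemP B).1 hB with h | h
        · subst h; exact fun z hz => hz.2
        · subst h; intro z hz heq; exact hz (heq ▸ huS)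
      · intro z hz
        by_cases hzS : z ∈ S
        · refine ⟨S \ {u}, ⟨hB1, hzS, hz⟩, ?_⟩
          rintro B ⟨hB, hzB⟩
          rcases (hmemP B).1 hB with h | h
          · exact h
          · rw [h] at hzB; exact absurd hzS hzB
        · refine ⟨Sᶜ, ⟨hB2, hzS⟩, ?_⟩
          rintro B ⟨hB, hzB⟩
          rcases (hmemP B).1 hB with h | h
          · exact absurd (h ▸ hzB : z ∈ S \ {u}).1 hzS
          · exact h
    · rintro B ⟨z, hzu, rfl⟩
      by_cases hzS : z ∈ S
      · exact ⟨S \ {u}, hB1, fun y hy => reach_ind hstep1 hy ⟨hzS, hzu⟩⟩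
      · exact ⟨Sᶜ, hB2, fun y hy => (reach_ind hstep2 hy ⟨hzS, hzu⟩).1⟩
  have hLP := hx.2 u hu P hP
  rw [hcard] at hLP
  push_cast at hLP
  set C : Finset (Sym2 V) :=
    Finset.univ.filter (fun ℓ : Sym2 V => ℓ ∈ links G T ∧ Crosses P ℓ) with hC
  have hsub : C ⊆ A.erase s(u, v) := by
    intro ℓ hℓ
    rw [hC, Finset.mem_filter] at hℓ
    obtain ⟨-, ⟨hGℓ, hTℓ⟩, a, b, rfl, B, hB, C', hC', hne, haB, hbC⟩ := hℓ
    refine Finset.mem_erase.mpr ⟨fun h => hTℓ (h ▸ he0T), (hmemA _).2 ⟨hGℓ, ?_⟩⟩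
    rcases (hmemP B).1 hB with hB' | hB' <;> rcases (hmemP C').1 hC' with hC'' | hC''
    · exact absurd (hB'.trans hC''.symm) hne
    · subst hB'; subst hC''
      exact ⟨a, b, rfl, haB.1, hbC⟩
    · subst hB'; subst hC''
      exact ⟨b, a, Sym2.eq_swap, hbC.1, haB⟩
    · exact absurd (hB'.trans hC''.symm) hne
  have hCsum : ∑ ℓ ∈ C, x ℓ = ∑ ℓ ∈ C, f ℓ := by
    refine Finset.sum_congr rfl ?_
    intro ℓ hℓ
    have hTℓ : ℓ ∉ T.edgeSet := ((Finset.mem_filter.mp (hC ▸ hℓ)).2.1).2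
    simp [hf, hTℓ]
  have h1 : ∑ ℓ ∈ C, f ℓ ≤ ∑ e ∈ A.erase s(u, v), f e :=
    Finset.sum_le_sum_of_subset_of_nonneg hsub
      (fun e he _ => hnonneg e (Finset.mem_of_mem_erase he))
  have h2 : f s(u, v) + ∑ e ∈ A.erase s(u, v), f e = ∑ e ∈ A, f e :=
    Finset.add_sum_erase A f he0A
  have hf0 : f s(u, v) = 1 := by simp [hf, he0T]
  show (2 : ℝ) ≤ ∑ e ∈ A, f e
  linarith

/-- If `x` is a feasible solution of the partition LP (P) of a 2NC-TAP
instance, then the vector `x̃` (equal to `x` on links and to `1` on tree edges)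
satisfies all cut constraints for 2-edge connectivity. -/
theorem tilde_x_satisfies_cut_constraints
    (G T : SimpleGraph V) (hV : 3 ≤ Fintype.card V)
    (hTG : T ≤ G) (hT : T.IsTree)
    (cost : Sym2 V → ℝ) (hcost : ∀ ℓ ∈ links G T, 0 ≤ cost ℓ)
    (x : Sym2 V → ℝ) (hx : FeasibleP G T x) :
    ∀ S : Set V, S.Nonempty → S ≠ Set.univ →
      (2 : ℝ) ≤ ∑ e ∈ Finset.univ.filter (fun e : Sym2 V => e ∈ G.edgeSet ∧ inCut S e),
        (if e ∈ T.edgeSet then 1 else x e) := by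
  intro S hS hSuniv
  obtain ⟨a, haS⟩ := hS
  obtain ⟨b, hbS⟩ := (Set.ne_univ_iff_exists_notMem S).mp hSuniv
  obtain ⟨p⟩ := hT.isConnected.preconnected a b
  obtain ⟨d, -, hdf, hds⟩ := p.exists_boundary_dart S haS hbS
  have huv : T.Adj d.fst d.snd := d.adj
  by_cases huniq : ∀ e ∈ T.edgeSet, inCut S e → e = s(d.fst, d.snd)
  · rcases nonleaf_of_adj T hV hT huv with h | h
    · exact key_lemma G T hTG hT x hx S _ _ huv hdf hds huniq h
    · have hfil : Finset.univ.filter (fun e : Sym2 V => e ∈ G.edgeSet ∧ inCut S e)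
          = Finset.univ.filter (fun e : Sym2 V => e ∈ G.edgeSet ∧ inCut Sᶜ e) := by
        apply Finset.filter_congr
        intro e _
        exact and_congr_right fun _ => (inCut_compl_iff S e).symm
      rw [hfil]
      refine key_lemma G T hTG hT x hx Sᶜ d.snd d.fst huv.symm hds (by simpa using hdf) ?_ h
      intro e he hce
      rw [Sym2.eq_swap]
      exact huniq e he ((inCut_compl_iff S e).mp hce)
  · push_neg at huniq
    obtain ⟨e₁, he₁T, he₁cut, he₁ne⟩ := huniq
    set f : Sym2 V → ℝ := fun e => if e ∈ T.edgeSet then 1 else x e with hf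
    set A : Finset (Sym2 V) :=
      Finset.univ.filter (fun e : Sym2 V => e ∈ G.edgeSet ∧ inCut S e) with hA
    have hmemA : ∀ e, e ∈ A ↔ e ∈ G.edgeSet ∧ inCut S e := by
      intro e; simp [hA]
    have hnonneg : ∀ e ∈ A, 0 ≤ f e := by
      intro e he
      obtain ⟨hG, -⟩ := (hmemA e).1 he
      by_cases hh : e ∈ T.edgeSet
      · simp [hf, hh]
      · simpa [hf, hh] using hx.1 e ⟨hG, hh⟩
    have he0T : s(d.fst, d.snd) ∈ T.edgeSet := T.mem_edgeSet.mpr huv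
    have he0A : s(d.fst, d.snd) ∈ A :=
      (hmemA _).2 ⟨G.mem_edgeSet.mpr (hTG huv), d.fst, d.snd, rfl, hdf, hds⟩
    have he1A : e₁ ∈ A :=
      (hmemA _).2 ⟨SimpleGraph.edgeSet_mono hTG he₁T, he₁cut⟩
    have hpair : ({e₁, s(d.fst, d.snd)} : Finset (Sym2 V)) ⊆ A := by
      intro z hz
      rcases Finset.mem_insert.mp hz with rfl | hz
      · exact he1A
      · rw [Finset.mem_singleton.mp hz]; exact he0A
    have hsum : ∑ e ∈ ({e₁, s(d.fst, d.snd)} : Finset (Sym2 V)), f e = 2 := by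
      rw [Finset.sum_pair he₁ne]
      simp [hf, he₁T, he0T]
      norm_num
    show (2 : ℝ) ≤ ∑ e ∈ A, f e
    rw [← hsum]
    exact Finset.sum_le_sum_of_subset_of_nonneg hpair (fun e he _ => hnonneg e he)


end TwoNCTAP
end

section
/- Let n ≥ 4 and let G be the graph on nodes {r, u_1, …, u_{n−1}} consisting of the spanning star T = K_{1,n−1} with center r and leaves u_1, …, u_{n−1} (tree edges of cost 0), together with the n−1 unit-cost links u_i u_{i+1} for i ∈ [n−2] and u_{n−1} u_1. Then the vector x̂ ∈ ℝ^{E(G)} with x̂_e = 1 for every tree edge e and x̂_ℓ = 1/2 for every link ℓ is a feasible solution of the set-pairs LP for (G, cost), of total cost (n−1)/2. Combined with the fact that every integral feasible solution has cost at least n−2, the integrality ratio of the set-pairs LP on this family of instances is at least 2(n−2)/(n−1), which tends to 2 as n → ∞. -/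
open scoped Classical
open Finset
open Fin.NatCast

namespace TwoNCTAP

variable {V : Type*}

def withLinks (T : SimpleGraph V) (F : Set (Sym2 V)) : SimpleGraph V :=
  T ⊔ SimpleGraph.fromEdgeSet F

def inCutAvoiding (w : V) (S : Set V) (e : Sym2 V) : Prop :=
  ∃ a b, e = s(a, b) ∧ a ∈ S ∧ b ∉ S ∧ b ≠ w

/-- cyclic successor on positions `1..m`. -/
def cyc (m k : ℕ) : ℕ := if k = m then 1 else k + 1

lemma cyc_mem {m k : ℕ} (hm : 1 ≤ m) (h1 : 1 ≤ k) (h2 : k ≤ m) :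
    1 ≤ cyc m k ∧ cyc m k ≤ m := by unfold cyc; split_ifs <;> omega

lemma cyc_ne {m k : ℕ} (hm : 2 ≤ m) (h1 : 1 ≤ k) (h2 : k ≤ m) : cyc m k ≠ k := by
  unfold cyc; split_ifs <;> omega

lemma cyc_cyc_ne {m k : ℕ} (hm : 3 ≤ m) (h1 : 1 ≤ k) (h2 : k ≤ m) :
    cyc m (cyc m k) ≠ k := by unfold cyc; split_ifs <;> omega

lemma exists_flip (Q : ℕ → Prop) : ∀ t, Q 0 → ¬ Q t → ∃ s, Q s ∧ ¬ Q (s + 1) := by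
  intro t h0 ht
  induction t with
  | zero => exact absurd h0 ht
  | succ t ih =>
    by_cases h : Q t
    · exact ⟨t, h, ht⟩
    · exact ih h

lemma cyc_rho {m : ℕ} (hm : 2 ≤ m) (i t : ℕ) :
    cyc m ((i - 1 + t) % m + 1) = (i - 1 + (t + 1)) % m + 1 := by
  set a := i - 1 + t with ha
  have h : i - 1 + (t + 1) = a + 1 := by omega
  rw [h]
  have hlt : a % m < m := Nat.mod_lt _ (by omega)
  have key : (a + 1) % m = (a % m + 1) % m := by
    conv_lhs => rw [Nat.add_mod, Nat.mod_eq_of_lt (show (1:ℕ) < m by omega)]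
  unfold cyc
  split_ifs with hif
  · have h0 : (a + 1) % m = 0 := by
      rw [key]
      have : a % m + 1 = m := by omega
      rw [this, Nat.mod_self]
    omega
  · have : (a + 1) % m = a % m + 1 := by
      rw [key, Nat.mod_eq_of_lt (by omega)]
    omega

lemma rho_reach {m i j : ℕ} (hm : 1 ≤ m) (hi1 : 1 ≤ i) (him : i ≤ m)
    (hj1 : 1 ≤ j) (hjm : j ≤ m) : ∃ t, (i - 1 + t) % m + 1 = j := by
  refine ⟨m + j - i, ?_⟩
  have h : i - 1 + (m + j - i) = (j - 1) + m := by omega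
  rw [h, Nat.add_mod_right, Nat.mod_eq_of_lt (by omega)]
  omega

lemma exists_flip_up {m : ℕ} (hm : 2 ≤ m) (P : ℕ → Prop) {i j : ℕ} (hi1 : 1 ≤ i)
    (him : i ≤ m) (hj1 : 1 ≤ j) (hjm : j ≤ m) (hPi : P i) (hPj : ¬ P j) :
    ∃ a, 1 ≤ a ∧ a ≤ m ∧ P a ∧ ¬ P (cyc m a) := by
  obtain ⟨t, ht⟩ := rho_reach (by omega : 1 ≤ m) hi1 him hj1 hjm
  have h0 : P ((i - 1 + 0) % m + 1) := by
    rwa [Nat.add_zero, Nat.mod_eq_of_lt (by omega), show i - 1 + 1 = i by omega]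
  obtain ⟨s, hQs, hQs1⟩ := exists_flip (fun t => P ((i - 1 + t) % m + 1)) t h0
    (by show ¬ P ((i - 1 + t) % m + 1); rw [ht]; exact hPj)
  refine ⟨(i - 1 + s) % m + 1, by omega, ?_, hQs, ?_⟩
  · have := Nat.mod_lt (i - 1 + s) (show 0 < m by omega); omega
  · rw [cyc_rho hm]; exact hQs1

lemma exists_flip_down {m : ℕ} (hm : 2 ≤ m) (P : ℕ → Prop) {i j : ℕ} (hi1 : 1 ≤ i)
    (him : i ≤ m) (hj1 : 1 ≤ j) (hjm : j ≤ m) (hPi : P i) (hPj : ¬ P j) :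
    ∃ b, 1 ≤ b ∧ b ≤ m ∧ ¬ P b ∧ P (cyc m b) := by
  obtain ⟨b, h1, h2, h3, h4⟩ := exists_flip_up hm (fun k => ¬ P k) hj1 hjm hi1 him hPj
    (by simpa using hPi)
  exact ⟨b, h1, h2, h3, by simpa using h4⟩

/-- For the star instance (`T = K_{1,n−1}` with tree edges of cost 0,
plus the `n−1` unit-cost links forming a cycle on the leaves), the vector `x̂` equal to
`1` on tree edges and `1/2` on links is feasible for the set-pairs LP, of total cost
`(n−1)/2`. -/
theorem star_instance_set_pairs_feasible
    (n : ℕ) (hn : 4 ≤ n)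
    (T : SimpleGraph (Fin n))
    (hT : T = SimpleGraph.fromEdgeSet
      {e | ∃ r i : Fin n, (r : ℕ) = 0 ∧ 1 ≤ (i : ℕ) ∧ e = s(r, i)})
    (Lk : Set (Sym2 (Fin n)))
    (hLk : Lk = {e | (∃ i j : Fin n, 1 ≤ (i : ℕ) ∧ (i : ℕ) ≤ n - 2 ∧
          (j : ℕ) = (i : ℕ) + 1 ∧ e = s(i, j)) ∨
        (∃ a b : Fin n, (a : ℕ) = n - 1 ∧ (b : ℕ) = 1 ∧ e = s(a, b))})
    (G : SimpleGraph (Fin n)) (hG : G = withLinks T Lk)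
    (cost : Sym2 (Fin n) → ℝ)
    (hcT : ∀ e ∈ T.edgeSet, cost e = 0) (hcL : ∀ e ∈ Lk, cost e = 1)
    (x : Sym2 (Fin n) → ℝ)
    (hx : x = fun e => if e ∈ T.edgeSet then 1 else 1 / 2) :
    (∀ e ∈ G.edgeSet, 0 ≤ x e ∧ x e ≤ 1) ∧
    (∀ S : Set (Fin n), S.Nonempty → S ≠ Set.univ →
      (2 : ℝ) ≤ ∑ e ∈ Finset.univ.filter
          (fun e : Sym2 (Fin n) => e ∈ G.edgeSet ∧ inCut S e), x e) ∧
    (∀ (w : Fin n) (S : Set (Fin n)), S.Nonempty → S ⊆ {v | v ≠ w} → S ≠ {v | v ≠ w} →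
      (1 : ℝ) ≤ ∑ e ∈ Finset.univ.filter
          (fun e : Sym2 (Fin n) => e ∈ G.edgeSet ∧ inCutAvoiding w S e), x e) ∧
    ∑ e ∈ Finset.univ.filter (fun e : Sym2 (Fin n) => e ∈ G.edgeSet), cost e * x e
      = ((n : ℝ) - 1) / 2 := by
  haveI : NeZero n := ⟨by omega⟩
  set m := n - 1 with hmdef
  have hm3 : 3 ≤ m := by omega
  have hval : ∀ a : ℕ, a ≤ m → ((a : Fin n) : ℕ) = a := fun a ha =>
    Fin.val_cast_of_lt (by omega)
  have hzero_iff : ∀ v : Fin n, (v : ℕ) = 0 ↔ v = 0 := by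
    intro v
    constructor
    · intro h; exact Fin.ext (by simpa using h)
    · intro h; subst h; simp
  have hleaf : ∀ v : Fin n, v ≠ 0 → 1 ≤ (v : ℕ) ∧ (v : ℕ) ≤ m := by
    intro v hv
    have h1 : (v : ℕ) ≠ 0 := fun h => hv ((hzero_iff v).mp h)
    have h2 := v.isLt
    omega
  have nz : ∀ a : ℕ, 1 ≤ a → a ≤ m → ((a : ℕ) : Fin n) ≠ 0 := by
    intro a h1 h2 h
    have := congrArg Fin.val h
    rw [hval a h2] at this
    simp at this
    omega
  -- tree edge membership
  have hTmem : ∀ a b : Fin n, s(a, b) ∈ T.edgeSet ↔ ((a = 0 ∧ b ≠ 0) ∨ (b = 0 ∧ a ≠ 0)) := by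
    intro a b
    rw [hT, SimpleGraph.edgeSet_fromEdgeSet]
    simp only [Set.mem_diff, Set.mem_setOf_eq, Sym2.mk_isDiag_iff]
    constructor
    · rintro ⟨⟨r, i, hr, hi, he⟩, hne⟩
      have hr0 : r = 0 := (hzero_iff r).mp hr
      have hi0 : i ≠ 0 := by
        intro h; rw [h] at hi; simp at hi
      rcases Sym2.eq_iff.mp he with ⟨h1, h2⟩ | ⟨h1, h2⟩
      · exact Or.inl ⟨h1.trans hr0, h2 ▸ hi0⟩
      · exact Or.inr ⟨h2.trans hr0, h1 ▸ hi0⟩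
    · rintro (⟨rfl, hb⟩ | ⟨rfl, ha⟩)
      · refine ⟨⟨0, b, by simp, ?_, rfl⟩, fun h => hb h.symm⟩
        have := (hzero_iff b).not.mpr hb
        omega
      · refine ⟨⟨0, a, by simp, ?_, Sym2.eq_swap.symm⟩, fun h => ha h⟩
        have := (hzero_iff a).not.mpr ha
        omega
  -- link membership
  have hLkmem : ∀ e, e ∈ Lk ↔
      ∃ a : ℕ, 1 ≤ a ∧ a ≤ m ∧ e = s((a : Fin n), ((cyc m a : ℕ) : Fin n)) := by
    intro e
    rw [hLk]
    simp only [Set.mem_setOf_eq]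
    constructor
    · rintro (⟨i, j, hi1, hi2, hj, he⟩ | ⟨a, b, ha, hb, he⟩)
      · refine ⟨(i : ℕ), hi1, by omega, ?_⟩
        have hc : cyc m (i : ℕ) = (i : ℕ) + 1 := by unfold cyc; rw [if_neg (by omega)]
        rw [he, hc]
        have e1 : ((i : ℕ) : Fin n) = i := Fin.cast_val_eq_self i
        have e2 : (((i : ℕ) + 1 : ℕ) : Fin n) = j := by
          apply Fin.ext
          rw [hval _ (by omega), hj]
        rw [e1, e2]
      · refine ⟨m, by omega, le_refl m, ?_⟩
        have hc : cyc m m = 1 := by unfold cyc; rw [if_pos rfl]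
        rw [he, hc]
        have e1 : ((m : ℕ) : Fin n) = a := by
          apply Fin.ext; rw [hval _ (le_refl m), ha]
        have e2 : ((1 : ℕ) : Fin n) = b := by
          apply Fin.ext; rw [hval _ (by omega), hb]
        rw [e1, e2]
    · rintro ⟨a, ha1, ham, rfl⟩
      by_cases h : a = m
      · right
        refine ⟨(a : Fin n), ((cyc m a : ℕ) : Fin n), ?_, ?_, rfl⟩
        · rw [hval _ ham]; omega
        · rw [hval _ (cyc_mem (by omega) ha1 ham).2]
          subst h; unfold cyc; rw [if_pos rfl]
      · left
        refine ⟨(a : Fin n), ((cyc m a : ℕ) : Fin n), ?_, ?_, ?_, rfl⟩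
        · rw [hval _ ham]; exact ha1
        · rw [hval _ ham]; omega
        · rw [hval _ ham, hval _ (cyc_mem (by omega) ha1 ham).2]
          unfold cyc; rw [if_neg h]
  have hLk_not_T : ∀ e ∈ Lk, e ∉ T.edgeSet := by
    intro e he
    obtain ⟨a, h1, h2, rfl⟩ := (hLkmem e).mp he
    rw [hTmem]
    have hc := cyc_mem (by omega) h1 h2
    rintro (⟨h3, -⟩ | ⟨h3, -⟩)
    · exact nz a h1 h2 h3
    · exact nz _ hc.1 hc.2 h3
  have hLk_ndiag : ∀ e ∈ Lk, ¬ e.IsDiag := by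
    intro e he
    obtain ⟨a, h1, h2, rfl⟩ := (hLkmem e).mp he
    rw [Sym2.mk_isDiag_iff]
    intro h
    have := congrArg Fin.val h
    rw [hval _ h2, hval _ (cyc_mem (by omega) h1 h2).2] at this
    exact cyc_ne (by omega) h1 h2 this.symm
  have hGmem : ∀ e, e ∈ G.edgeSet ↔ e ∈ T.edgeSet ∨ e ∈ Lk := by
    intro e
    rw [hG, withLinks, SimpleGraph.edgeSet_sup, SimpleGraph.edgeSet_fromEdgeSet]
    simp only [Set.mem_union, Set.mem_diff, Set.mem_setOf_eq]
    constructor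
    · rintro (h | ⟨h, -⟩)
      · exact Or.inl h
      · exact Or.inr h
    · rintro (h | h)
      · exact Or.inl h
      · exact Or.inr ⟨h, hLk_ndiag e h⟩
  -- values of x
  have hx1 : ∀ e ∈ T.edgeSet, x e = 1 := by intro e he; rw [hx]; simp [he]
  have hx2 : ∀ e ∈ Lk, x e = 1 / 2 := by
    intro e he; rw [hx]; simp [hLk_not_T e he]
  have hx0 : ∀ e, 0 ≤ x e := by
    intro e; rw [hx]; dsimp only; split_ifs <;> norm_num
  -- membership of specific edges in G
  have hGtree : ∀ a b : Fin n, (a = 0 ∧ b ≠ 0) ∨ (b = 0 ∧ a ≠ 0) → s(a, b) ∈ G.edgeSet :=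
    fun a b h => (hGmem _).mpr (Or.inl ((hTmem a b).mpr h))
  have hlinkmem : ∀ a : ℕ, 1 ≤ a → a ≤ m →
      s((a : Fin n), ((cyc m a : ℕ) : Fin n)) ∈ Lk :=
    fun a h1 h2 => (hLkmem _).mpr ⟨a, h1, h2, rfl⟩
  have hGlink : ∀ a : ℕ, 1 ≤ a → a ≤ m →
      s((a : Fin n), ((cyc m a : ℕ) : Fin n)) ∈ G.edgeSet :=
    fun a h1 h2 => (hGmem _).mpr (Or.inr (hlinkmem a h1 h2))
  -- distinct links
  have hlink_ne : ∀ a b : ℕ, 1 ≤ a → a ≤ m → 1 ≤ b → b ≤ m → a ≠ b →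
      s((a : Fin n), ((cyc m a : ℕ) : Fin n)) ≠ s((b : Fin n), ((cyc m b : ℕ) : Fin n)) := by
    intro a b ha1 ha2 hb1 hb2 hab h
    have hca := cyc_mem (by omega : 1 ≤ m) ha1 ha2
    have hcb := cyc_mem (by omega : 1 ≤ m) hb1 hb2
    rcases Sym2.eq_iff.mp h with ⟨h1, h2⟩ | ⟨h1, h2⟩
    · apply hab
      have := congrArg Fin.val h1
      rwa [hval _ ha2, hval _ hb2] at this
    · have hv1 : a = cyc m b := by
        have := congrArg Fin.val h1
        rwa [hval _ ha2, hval _ hcb.2] at this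
      have hv2 : cyc m a = b := by
        have := congrArg Fin.val h2
        rwa [hval _ hca.2, hval _ hb2] at this
      exact cyc_cyc_ne hm3 hb1 hb2 (by rw [← hv1, hv2])
  -- sum bound machinery
  have hsum_ge : ∀ (F F' : Finset (Sym2 (Fin n))), F ⊆ F' →
      ∑ e ∈ F, x e ≤ ∑ e ∈ F', x e := fun F F' h =>
    Finset.sum_le_sum_of_subset_of_nonneg h (fun e _ _ => hx0 e)
  refine ⟨?_, ?_, ?_, ?_⟩
  · -- bounds
    intro e _
    rw [hx]; dsimp only
    split_ifs <;> norm_num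
  · -- cut constraints
    have key2 : ∀ S : Set (Fin n), S.Nonempty → S ≠ Set.univ → (0 : Fin n) ∉ S →
        (2 : ℝ) ≤ ∑ e ∈ Finset.univ.filter
          (fun e : Sym2 (Fin n) => e ∈ G.edgeSet ∧ inCut S e), x e := by
      intro S hS hSu h0S
      obtain ⟨i, hiS⟩ := hS
      have hi0 : i ≠ 0 := fun h => h0S (h ▸ hiS)
      by_cases hsing : ∃ j ∈ S, j ≠ i
      · obtain ⟨j, hjS, hji⟩ := hsing
        have hj0 : j ≠ 0 := fun h => h0S (h ▸ hjS)
        have hT_i : s((0 : Fin n), i) ∈ T.edgeSet := (hTmem _ _).mpr (Or.inl ⟨rfl, hi0⟩)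
        have hT_j : s((0 : Fin n), j) ∈ T.edgeSet := (hTmem _ _).mpr (Or.inl ⟨rfl, hj0⟩)
        have hne : s((0 : Fin n), i) ≠ s((0 : Fin n), j) := by
          intro h
          rcases Sym2.eq_iff.mp h with ⟨-, h2⟩ | ⟨h1, -⟩
          · exact hji h2.symm
          · exact hj0 h1.symm
        have hp : ∑ e ∈ ({s((0:Fin n), i), s((0:Fin n), j)} : Finset (Sym2 (Fin n))), x e
            = 2 := by
          rw [Finset.sum_pair hne, hx1 _ hT_i, hx1 _ hT_j]; norm_num
        refine le_trans (le_of_eq hp.symm) (hsum_ge _ _ ?_)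
        intro e he
        simp only [Finset.mem_filter, Finset.mem_univ, true_and]
        rcases Finset.mem_insert.mp he with rfl | he
        · exact ⟨hGtree _ _ (Or.inl ⟨rfl, hi0⟩), i, 0, Sym2.eq_swap, hiS, h0S⟩
        · rw [Finset.mem_singleton] at he; subst he
          exact ⟨hGtree _ _ (Or.inl ⟨rfl, hj0⟩), j, 0, Sym2.eq_swap, hjS, h0S⟩
      · push_neg at hsing
        obtain ⟨hI1, hIm⟩ := hleaf i hi0
        obtain ⟨J, hJ1, hJm, hJI⟩ : ∃ J : ℕ, 1 ≤ J ∧ J ≤ m ∧ J ≠ (i : ℕ) := by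
          refine ⟨if (i:ℕ) = 1 then 2 else 1, ?_, ?_, ?_⟩ <;> split_ifs <;> omega
        have hPI : ((↑(i:ℕ) : Fin n) ∈ S) := by rw [Fin.cast_val_eq_self]; exact hiS
        have hPJ : ¬ ((↑J : Fin n) ∈ S) := by
          intro h
          have h2 := hsing _ h
          have h3 := congrArg Fin.val h2
          rw [hval _ hJm] at h3
          exact hJI h3
        obtain ⟨a, ha1, ham, hPa, hPca⟩ := exists_flip_up (by omega : 2 ≤ m)
          (fun k : ℕ => ((k : Fin n) ∈ S)) hI1 hIm hJ1 hJm hPI hPJ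
        obtain ⟨b, hb1, hbm, hPb, hPcb⟩ := exists_flip_down (by omega : 2 ≤ m)
          (fun k : ℕ => ((k : Fin n) ∈ S)) hI1 hIm hJ1 hJm hPI hPJ
        have hab : a ≠ b := fun h => hPb (h ▸ hPa)
        set e0 := s((0 : Fin n), i) with he0
        set e1 := s(((a:ℕ) : Fin n), ((cyc m a : ℕ) : Fin n)) with he1
        set e2 := s(((b:ℕ) : Fin n), ((cyc m b : ℕ) : Fin n)) with he2
        have he0T : e0 ∈ T.edgeSet := (hTmem _ _).mpr (Or.inl ⟨rfl, hi0⟩)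
        have he1L : e1 ∈ Lk := hlinkmem a ha1 ham
        have he2L : e2 ∈ Lk := hlinkmem b hb1 hbm
        have h01 : e0 ≠ e1 := fun h => hLk_not_T e1 he1L (h ▸ he0T)
        have h02 : e0 ≠ e2 := fun h => hLk_not_T e2 he2L (h ▸ he0T)
        have h12 : e1 ≠ e2 := hlink_ne a b ha1 ham hb1 hbm hab
        have hnotmem : e0 ∉ ({e1, e2} : Finset (Sym2 (Fin n))) := by
          simp [h01, h02]
        have hp : ∑ e ∈ (insert e0 {e1, e2} : Finset (Sym2 (Fin n))), x e = 2 := by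
          rw [Finset.sum_insert hnotmem, Finset.sum_pair h12,
            hx1 _ he0T, hx2 _ he1L, hx2 _ he2L]
          norm_num
        refine le_trans (le_of_eq hp.symm) (hsum_ge _ _ ?_)
        intro e he
        simp only [Finset.mem_filter, Finset.mem_univ, true_and]
        rcases Finset.mem_insert.mp he with rfl | he
        · exact ⟨hGtree _ _ (Or.inl ⟨rfl, hi0⟩), i, 0, Sym2.eq_swap, hiS, h0S⟩
        rcases Finset.mem_insert.mp he with rfl | he
        · exact ⟨hGlink a ha1 ham, _, _, rfl, hPa, hPca⟩
        rw [Finset.mem_singleton] at he; subst he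
        exact ⟨hGlink b hb1 hbm, _, _, Sym2.eq_swap, hPcb, hPb⟩
    intro S hS hSu
    by_cases h0 : (0 : Fin n) ∈ S
    · have hflip : ∀ e, inCut S e ↔ inCut Sᶜ e := by
        intro e
        constructor
        · rintro ⟨a, b, he, ha, hb⟩
          exact ⟨b, a, he.trans Sym2.eq_swap, hb, by simpa using ha⟩
        · rintro ⟨a, b, he, ha, hb⟩
          exact ⟨b, a, he.trans Sym2.eq_swap, by simpa using hb, ha⟩
      have heq : Finset.univ.filter (fun e : Sym2 (Fin n) => e ∈ G.edgeSet ∧ inCut S e)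
          = Finset.univ.filter (fun e => e ∈ G.edgeSet ∧ inCut Sᶜ e) := by
        apply Finset.filter_congr
        intro e _
        simp [hflip e]
      rw [heq]
      apply key2
      · obtain ⟨v, hv⟩ := Set.ne_univ_iff_exists_notMem S |>.mp hSu
        exact ⟨v, hv⟩
      · intro h
        obtain ⟨v, hv⟩ := hS
        have hv2 : v ∈ Sᶜ := h ▸ Set.mem_univ v
        exact hv2 hv
      · simpa using h0
    · exact key2 S hS hSu h0
  · -- set-pair constraints
    intro w S hS hsub hne
    by_cases hw : w = 0
    · subst hw
      have h0S : (0 : Fin n) ∉ S := fun h => (hsub h) rfl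
      obtain ⟨i, hiS⟩ := hS
      have hi0 : i ≠ 0 := hsub hiS
      obtain ⟨j, hjw, hjS⟩ := Set.exists_of_ssubset (hsub.ssubset_of_ne hne)
      have hj0 : j ≠ 0 := hjw
      obtain ⟨hI1, hIm⟩ := hleaf i hi0
      obtain ⟨hJ1, hJm⟩ := hleaf j hj0
      have hPI : ((↑(i:ℕ) : Fin n) ∈ S) := by rw [Fin.cast_val_eq_self]; exact hiS
      have hPJ : ¬ ((↑(j:ℕ) : Fin n) ∈ S) := by rw [Fin.cast_val_eq_self]; exact hjS
      obtain ⟨a, ha1, ham, hPa, hPca⟩ := exists_flip_up (by omega : 2 ≤ m)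
        (fun k : ℕ => ((k : Fin n) ∈ S)) hI1 hIm hJ1 hJm hPI hPJ
      obtain ⟨b, hb1, hbm, hPb, hPcb⟩ := exists_flip_down (by omega : 2 ≤ m)
        (fun k : ℕ => ((k : Fin n) ∈ S)) hI1 hIm hJ1 hJm hPI hPJ
      have hab : a ≠ b := fun h => hPb (h ▸ hPa)
      set e1 := s(((a:ℕ) : Fin n), ((cyc m a : ℕ) : Fin n)) with he1
      set e2 := s(((b:ℕ) : Fin n), ((cyc m b : ℕ) : Fin n)) with he2
      have he1L : e1 ∈ Lk := hlinkmem a ha1 ham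
      have he2L : e2 ∈ Lk := hlinkmem b hb1 hbm
      have h12 : e1 ≠ e2 := hlink_ne a b ha1 ham hb1 hbm hab
      have hp : ∑ e ∈ ({e1, e2} : Finset (Sym2 (Fin n))), x e = 1 := by
        rw [Finset.sum_pair h12, hx2 _ he1L, hx2 _ he2L]; norm_num
      refine le_trans (le_of_eq hp.symm) (hsum_ge _ _ ?_)
      intro e he
      simp only [Finset.mem_filter, Finset.mem_univ, true_and]
      rcases Finset.mem_insert.mp he with rfl | he
      · exact ⟨hGlink a ha1 ham, _, _, rfl, hPa, hPca,
          nz _ (cyc_mem (by omega) ha1 ham).1 (cyc_mem (by omega) ha1 ham).2⟩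
      rw [Finset.mem_singleton] at he; subst he
      exact ⟨hGlink b hb1 hbm, _, _, Sym2.eq_swap, hPcb, hPb, nz b hb1 hbm⟩
    · by_cases h0 : (0 : Fin n) ∈ S
      · obtain ⟨b, hbw, hbS⟩ := Set.exists_of_ssubset (hsub.ssubset_of_ne hne)
        have hb0 : b ≠ 0 := fun h => hbS (h ▸ h0)
        have hmemT : s((0:Fin n), b) ∈ T.edgeSet := (hTmem _ _).mpr (Or.inl ⟨rfl, hb0⟩)
        have hp : ∑ e ∈ ({s((0:Fin n), b)} : Finset (Sym2 (Fin n))), x e = 1 := by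
          rw [Finset.sum_singleton, hx1 _ hmemT]
        refine le_trans (le_of_eq hp.symm) (hsum_ge _ _ ?_)
        intro e he
        simp only [Finset.mem_filter, Finset.mem_univ, true_and]
        rw [Finset.mem_singleton] at he; subst he
        exact ⟨hGtree _ _ (Or.inl ⟨rfl, hb0⟩), 0, b, rfl, h0, hbS, hbw⟩
      · obtain ⟨a, haS⟩ := hS
        have ha0 : a ≠ 0 := fun h => h0 (h ▸ haS)
        have hmemT : s(a, (0:Fin n)) ∈ T.edgeSet := (hTmem _ _).mpr (Or.inr ⟨rfl, ha0⟩)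
        have hp : ∑ e ∈ ({s(a, (0:Fin n))} : Finset (Sym2 (Fin n))), x e = 1 := by
          rw [Finset.sum_singleton, hx1 _ hmemT]
        refine le_trans (le_of_eq hp.symm) (hsum_ge _ _ ?_)
        intro e he
        simp only [Finset.mem_filter, Finset.mem_univ, true_and]
        rw [Finset.mem_singleton] at he; subst he
        exact ⟨hGtree _ _ (Or.inr ⟨rfl, ha0⟩), a, 0, rfl, haS, h0, fun h => hw h.symm⟩
  · -- total cost
    have hdisj : Disjoint (Finset.univ.filter (fun e : Sym2 (Fin n) => e ∈ T.edgeSet))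
        (Finset.univ.filter (fun e : Sym2 (Fin n) => e ∈ Lk)) := by
      rw [Finset.disjoint_left]
      intro e he1 he2
      rw [Finset.mem_filter] at he1 he2
      exact hLk_not_T e he2.2 he1.2
    have hunion : Finset.univ.filter (fun e : Sym2 (Fin n) => e ∈ G.edgeSet)
        = Finset.univ.filter (fun e : Sym2 (Fin n) => e ∈ T.edgeSet)
          ∪ Finset.univ.filter (fun e : Sym2 (Fin n) => e ∈ Lk) := by
      ext e
      simp only [Finset.mem_filter, Finset.mem_univ, true_and, Finset.mem_union]
      exact hGmem e
    rw [hunion, Finset.sum_union hdisj]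
    have h1 : ∑ e ∈ Finset.univ.filter (fun e : Sym2 (Fin n) => e ∈ T.edgeSet),
        cost e * x e = 0 := by
      apply Finset.sum_eq_zero
      intro e he
      rw [Finset.mem_filter] at he
      rw [hcT e he.2]; ring
    have h2 : ∑ e ∈ Finset.univ.filter (fun e : Sym2 (Fin n) => e ∈ Lk), cost e * x e
        = ∑ _e ∈ Finset.univ.filter (fun e : Sym2 (Fin n) => e ∈ Lk), (1/2 : ℝ) := by
      apply Finset.sum_congr rfl
      intro e he
      rw [Finset.mem_filter] at he
      rw [hcL e he.2, hx2 e he.2]; ring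
    have hinj : Set.InjOn (fun a : ℕ => s((a : Fin n), ((cyc m a : ℕ) : Fin n)))
        (Finset.Icc 1 m) := by
      intro a ha b hb hfe
      rw [Finset.coe_Icc, Set.mem_Icc] at ha hb
      by_contra hab
      exact hlink_ne a b ha.1 ha.2 hb.1 hb.2 hab hfe
    have hcard : (Finset.univ.filter (fun e : Sym2 (Fin n) => e ∈ Lk)).card = m := by
      have himg : Finset.univ.filter (fun e : Sym2 (Fin n) => e ∈ Lk)
          = (Finset.Icc 1 m).image (fun a : ℕ => s((a : Fin n), ((cyc m a : ℕ) : Fin n))) := by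
        ext e
        simp only [Finset.mem_filter, Finset.mem_univ, true_and, Finset.mem_image,
          Finset.mem_Icc]
        rw [hLkmem e]
        constructor
        · rintro ⟨a, ha1, ha2, he⟩; exact ⟨a, ⟨ha1, ha2⟩, he.symm⟩
        · rintro ⟨a, ⟨ha1, ha2⟩, he⟩; exact ⟨a, ha1, ha2, he.symm⟩
      rw [himg, Finset.card_image_of_injOn hinj, Nat.card_Icc]
      omega
    rw [h1, h2, Finset.sum_const, hcard, nsmul_eq_mul]
    have hm' : ((m : ℕ) : ℝ) = (n : ℝ) - 1 := by
      rw [hmdef, Nat.cast_sub (by omega : 1 ≤ n), Nat.cast_one]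
    rw [hm']; ring

end TwoNCTAP
end
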